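/- Let C > 0 and consider the region Ω_C = {ε ∈ ℂ \ {0} : |Im ε| ≤ C|Re ε|}. Let l ≥ 2, c > 0, and let a(ε) be a branch of (−cε)^{1/l} on a sector of Ω_C. Then there exists a constant K > 0 (depending on C, c, l) such that dist(l a(ε)^{l−1}, iℝ) ≥ K |ε|^{1−1/l} for all ε in that sector. -/

import Mathlib

/-- Quantitative non-degeneracy of the twist coefficient for complex `ε`:
for `l ≥ 2`, `c > 0`, `C > 0`, on a sector of the region
`Ω_C = {ε ≠ 0 : |Im ε| ≤ C |Re ε|}` (here the sector `Re ε < 0`), the branch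
`a(ε) = exp(log(-cε)/l)` of `(-cε)^{1/l}` satisfies
`dist(l a(ε)^{l-1}, iℝ) = |Re(l a(ε)^{l-1})| ≥ K |ε|^{1-1/l}` for some
`K = K(C,c,l) > 0`. -/
theorem stmt14 (l : ℕ) (hl : 2 ≤ l) (c C : ℝ) (hc : 0 < c) (hC : 0 < C) :
    ∃ K : ℝ, 0 < K ∧
      ∀ ε : ℂ, ε ≠ 0 → ε.re < 0 → |ε.im| ≤ C * |ε.re| →
        K * ‖ε‖ ^ ((1 : ℝ) - 1 / l)
          ≤ |((l : ℂ) * (Complex.exp (Complex.log (-(c : ℂ) * ε) / l))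
              ^ (l - 1)).re| := by
  have hl0 : (0 : ℝ) < l := by exact_mod_cast (by omega : 0 < l)
  have hS : (0 : ℝ) < Real.sqrt (1 + C ^ 2) := Real.sqrt_pos.2 (by positivity)
  set p : ℝ := (1 : ℝ) - 1 / l with hp
  have hp0 : 0 ≤ p := by
    have h1 : 1 / (l : ℝ) ≤ 1 := by
      rw [div_le_one hl0]; exact_mod_cast (by omega : 1 ≤ l)
    simp only [hp]; linarith
  refine ⟨(l : ℝ) * c ^ p / Real.sqrt (1 + C ^ 2), by positivity, ?_⟩
  intro ε hε hre him
  set z : ℂ := -(c : ℂ) * ε with hzdef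
  have hzre : 0 < z.re := by
    simp only [hzdef, Complex.mul_re, Complex.neg_re, Complex.neg_im,
      Complex.ofReal_re, Complex.ofReal_im]
    nlinarith
  have hz : z ≠ 0 := fun h => by simp [h] at hzre
  have habs : ‖z‖ = c * ‖ε‖ := by
    simp [hzdef, map_mul, abs_of_pos hc]
  have habsε : 0 < ‖ε‖ := norm_pos_iff.mpr hε
  have habsz : 0 < ‖z‖ := norm_pos_iff.mpr hz
  -- bound the argument
  have harg_lt : |Complex.arg z| < Real.pi / 2 :=
    Complex.abs_arg_lt_pi_div_two_iff.2 (Or.inl hzre)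
  have harg_eq : Complex.arg z = Real.arctan (z.im / z.re) := by
    rw [← Complex.tan_arg, Real.arctan_tan (abs_lt.1 harg_lt).1 (abs_lt.1 harg_lt).2]
  have hratio : |z.im / z.re| ≤ C := by
    rw [abs_div, abs_of_pos hzre, div_le_iff₀ hzre]
    have h1 : z.im = -(c * ε.im) := by
      simp [hzdef, Complex.mul_im]
    have h2 : z.re = c * (-ε.re) := by
      simp only [hzdef, Complex.mul_re, Complex.neg_re, Complex.neg_im,
        Complex.ofReal_re, Complex.ofReal_im]; ring
    rw [h1, h2, abs_neg, abs_mul, abs_of_pos hc]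
    have habsre : |ε.re| = -ε.re := abs_of_neg hre
    have hm := mul_le_mul_of_nonneg_left him hc.le
    rw [habsre] at hm
    nlinarith
  have hargC : |Complex.arg z| ≤ Real.arctan C := by
    rw [harg_eq, abs_le]
    constructor
    · rw [← Real.arctan_neg]
      exact Real.arctan_strictMono.monotone (by have := (abs_le.1 hratio).1; linarith)
    · exact Real.arctan_strictMono.monotone (abs_le.1 hratio).2
  -- the exponent t
  set t : ℝ := ((l - 1 : ℕ) : ℝ) / l with ht
  have htp : t = p := by
    rw [ht, hp]
    have hcast : ((l - 1 : ℕ) : ℝ) = (l : ℝ) - 1 := by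
      have h1 : (1 : ℕ) ≤ l := by omega
      push_cast [h1]; ring
    rw [hcast]; field_simp
  have ht0 : 0 ≤ t := by positivity
  have ht1 : t ≤ 1 := by
    rw [ht, div_le_one hl0]
    exact_mod_cast (by omega : l - 1 ≤ l)
  -- rewrite the expression
  have hw : Complex.exp (Complex.log z / l) ^ (l - 1)
      = Complex.exp ((t : ℂ) * Complex.log z) := by
    rw [← Complex.exp_nat_mul]
    congr 1
    have hlc : (l : ℂ) ≠ 0 := by
      exact_mod_cast Nat.cast_ne_zero.2 (by omega : l ≠ 0)
    rw [ht]
    push_cast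
    field_simp
  have hre_eq : (((l : ℂ)) * Complex.exp ((t : ℂ) * Complex.log z)).re
      = l * (Real.exp (t * Real.log (‖z‖))
          * Real.cos (t * Complex.arg z)) := by
    have hml : (((l : ℂ)) * Complex.exp ((t : ℂ) * Complex.log z)).re
        = (l : ℝ) * (Complex.exp ((t : ℂ) * Complex.log z)).re := by
      simp [Complex.mul_re]
    rw [hml, Complex.exp_re]
    have h1 : ((t : ℂ) * Complex.log z).re = t * Real.log (‖z‖) := by
      simp [Complex.mul_re, Complex.log_re]
    have h2 : ((t : ℂ) * Complex.log z).im = t * Complex.arg z := by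
      simp [Complex.mul_im, Complex.log_im]
    rw [h1, h2]
  have hexp : Real.exp (t * Real.log (‖z‖)) = ‖z‖ ^ t := by
    rw [Real.rpow_def_of_pos habsz, mul_comm]
  -- cosine lower bound
  have hcos : 1 / Real.sqrt (1 + C ^ 2) ≤ Real.cos (t * Complex.arg z) := by
    rw [← Real.cos_arctan, ← Real.cos_abs (t * Complex.arg z)]
    apply Real.cos_le_cos_of_nonneg_of_le_pi (abs_nonneg _)
    · linarith [Real.pi_pos, Real.arctan_lt_pi_div_two C]
    · rw [abs_mul, abs_of_nonneg ht0]
      calc t * |Complex.arg z| ≤ 1 * |Complex.arg z| :=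
            mul_le_mul_of_nonneg_right ht1 (abs_nonneg _)
        _ = |Complex.arg z| := one_mul _
        _ ≤ Real.arctan C := hargC
  -- put everything together
  rw [hw, hre_eq, hexp, habs, Real.mul_rpow hc.le habsε.le, htp]
  have hpos : (0 : ℝ) ≤ (l : ℝ) * (c ^ p * ‖ε‖ ^ p) := by positivity
  calc (l : ℝ) * c ^ p / Real.sqrt (1 + C ^ 2) * ‖ε‖ ^ p
      = (l : ℝ) * (c ^ p * ‖ε‖ ^ p) * (1 / Real.sqrt (1 + C ^ 2)) := by
        ring
    _ ≤ (l : ℝ) * (c ^ p * ‖ε‖ ^ p) * Real.cos (p * Complex.arg z) := by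
        have := htp ▸ hcos
        exact mul_le_mul_of_nonneg_left this hpos
    _ = (l : ℝ) * (c ^ p * ‖ε‖ ^ p * Real.cos (p * Complex.arg z)) := by
        ring
    _ ≤ |(l : ℝ) * (c ^ p * ‖ε‖ ^ p * Real.cos (p * Complex.arg z))| :=
        le_abs_self _
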